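/- (MPG construction from symmetric pairwise rewards) Consider a finite product-structured Markov game in which each agent i's reward is a sum of pairwise terms r_i(s_t, a_t) = Σ_{j∈N, j≠i} r_ij(s_{i,t}, s_{j,t}, a_{i,t}, a_{j,t}) with the symmetry r_ij(s_i, s_j, a_i, a_j) = r_ji(s_j, s_i, a_j, a_i) for all i ≠ j, the transition kernel factorizes as P(s'|s,a) = ∏_{i=1}^N P_i(s_i'|s_i,a_i), the initial state distribution is a product ρ = ρ_1 ⊗ ⋯ ⊗ ρ_N, and each agent uses a local policy π_{i,θ_i}(a_i|s_i). Then the game is a Markov potential game with potential function φ^joint(s_t, a_t) = Σ_{i∈N} Σ_{j∈N, j<i} r_ij(s_{i,t}, s_{j,t}, a_{i,t}, a_{j,t}); that is, for every agent i, every θ_i, θ_i' ∈ X_i, every θ_{-i}, and every initial state s, the difference in agent i's expected discounted reward under π_{(θ_i',θ_{-i})} versus π_{(θ_i,θ_{-i})} equals the corresponding difference in the expected discounted sum of φ^joint. -/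

import Mathlib

open scoped BigOperators

/-! Common framework for finite *product-structured* Markov games.  Agents are
indexed by `Fin N`; agent `i` has local finite state space `S i` and finite
action space `A i`.  The global state space is `∀ i, S i`, the transition
kernel factorizes per agent, the initial distribution is a product, and each
agent uses a local directly parameterized policy `θ i : S i → A i → ℝ`. -/

section ProdMGDefs

/-- Distribution of the state at time `t` under transition kernel `P`,
policy `π` and initial distribution `ρ`. -/
def stateDist {σ α : Type} [Fintype σ] [Fintype α] (P : σ → α → σ → ℝ)
    (π : σ → α → ℝ) (ρ : σ → ℝ) : ℕ → σ → ℝ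
  | 0 => ρ
  | t + 1 => fun s' => ∑ s, ∑ a, stateDist P π ρ t s * π s a * P s a s'

/-- Expected discounted sum `E[∑ₜ γ^t f(s_t, a_t)]` of a state-action
function `f`, under kernel `P`, policy `π`, and initial distribution `ρ`. -/
noncomputable def expDisc {σ α : Type} [Fintype σ] [Fintype α] (γ : ℝ)
    (P : σ → α → σ → ℝ) (π : σ → α → ℝ) (ρ : σ → ℝ) (f : σ → α → ℝ) : ℝ :=
  ∑' t : ℕ, γ ^ t * ∑ s, ∑ a, stateDist P π ρ t s * π s a * f s a

/-- Dirac (point-mass) distribution at `s`. -/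
def dirac {σ : Type} [DecidableEq σ] (s : σ) : σ → ℝ :=
  fun s' => if s' = s then 1 else 0

variable {N : ℕ} {S A : Fin N → Type}
variable [∀ i, Fintype (S i)] [∀ i, Fintype (A i)]

/-- Joint policy `π_θ(a|s) = ∏ i, θ_i(a_i|s_i)` induced by the local
directly parameterized policies. -/
def jointPiL (θ : ∀ i, S i → A i → ℝ) : (∀ i, S i) → (∀ i, A i) → ℝ :=
  fun s a => ∏ i, θ i (s i) (a i)

/-- Factorized transition kernel `P(s'|s,a) = ∏ i, P_i(s_i'|s_i,a_i)`. -/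
def jointP (P : ∀ i, S i → A i → S i → ℝ) :
    (∀ i, S i) → (∀ i, A i) → (∀ i, S i) → ℝ :=
  fun s a s' => ∏ i, P i (s i) (a i) (s' i)

/-- Product initial state distribution `ρ = ρ_1 ⊗ ⋯ ⊗ ρ_N`. -/
def jointRho (ρ : ∀ i, S i → ℝ) : (∀ i, S i) → ℝ :=
  fun s => ∏ i, ρ i (s i)

/-- The feasible set of local policy profiles: each `θ i (s i)` lies in the
probability simplex `Δ(A i)`. -/
def feasibleL (θ : ∀ i, S i → A i → ℝ) : Prop :=
  ∀ i, ∀ si, θ i si ∈ stdSimplex ℝ (A i)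

end ProdMGDefs


section AuxLemmas

lemma sum_split {ι : Type} [Fintype ι] [DecidableEq ι] {B : ι → Type} [∀ j, Fintype (B j)]
    (i : ι) [Nonempty (B i)]
    (f f' : ∀ j, B j → ℝ) (hoff : ∀ j, j ≠ i → f j = f' j)
    (hi : ∑ x, f i x = ∑ x, f' i x)
    (g : (∀ j, B j) → ℝ) (hg : ∀ s x, g (Function.update s i x) = g s) :
    ∑ s : ∀ j, B j, (∏ j, f j (s j)) * g s = ∑ s : ∀ j, B j, (∏ j, f' j (s j)) * g s := by
  classical
  set e := (Equiv.piSplitAt i B).symm with he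
  have heval_i : ∀ (x : B i) (q : ∀ j : {j // j ≠ i}, B j), e (x, q) i = x := by
    intro x q; simp [he, Equiv.piSplitAt]
  have heval_ne : ∀ (x : B i) (q : ∀ j : {j // j ≠ i}, B j) (j : ι) (hj : j ≠ i),
      e (x, q) j = q ⟨j, hj⟩ := by
    intro x q j hj; simp [he, Equiv.piSplitAt, hj]
  have hg2 : ∀ s₁ s₂ : ∀ j, B j, (∀ j, j ≠ i → s₁ j = s₂ j) → g s₁ = g s₂ := by
    intro s₁ s₂ h
    have hs : s₂ = Function.update s₁ i (s₂ i) := by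
      funext j
      by_cases hj : j = i
      · subst hj; simp
      · simp [Function.update_of_ne hj, h j hj]
    rw [hs, hg]
  set x₀ : B i := Classical.arbitrary (B i) with hx₀
  have main : ∀ F : ∀ j, B j → ℝ, ∑ s : ∀ j, B j, (∏ j, F j (s j)) * g s
      = (∑ x, F i x) * ∑ q : ∀ j : {j // j ≠ i}, B j,
          (∏ j ∈ Finset.univ.erase i, F j (e (x₀, q) j)) * g (e (x₀, q)) := by
    intro F
    rw [← Equiv.sum_comp e (fun s => (∏ j, F j (s j)) * g s), Fintype.sum_prod_type,
      Finset.mul_sum, Finset.sum_comm]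
    refine Finset.sum_congr rfl fun q _ => ?_
    rw [Finset.sum_mul]
    refine Finset.sum_congr rfl fun x _ => ?_
    have hprod : ∏ j, F j (e (x, q) j)
        = F i x * ∏ j ∈ Finset.univ.erase i, F j (e (x, q) j) := by
      rw [← Finset.mul_prod_erase Finset.univ _ (Finset.mem_univ i), heval_i]
    have hper : ∏ j ∈ Finset.univ.erase i, F j (e (x, q) j)
        = ∏ j ∈ Finset.univ.erase i, F j (e (x₀, q) j) :=
      Finset.prod_congr rfl fun j hj => by
        rw [heval_ne x q j (Finset.mem_erase.1 hj).1, heval_ne x₀ q j (Finset.mem_erase.1 hj).1]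
    have hgq : g (e (x, q)) = g (e (x₀, q)) :=
      hg2 _ _ fun j hj => by rw [heval_ne x q j hj, heval_ne x₀ q j hj]
    rw [hprod, hper, hgq]; ring
  rw [main f, main f', hi]
  congr 1
  refine Finset.sum_congr rfl fun q _ => ?_
  congr 1
  exact Finset.prod_congr rfl fun j hj => by rw [hoff j (Finset.mem_erase.1 hj).1]

section Generic
variable {σ α : Type} [Fintype σ] [Fintype α]

lemma stateDist_nonneg (P : σ → α → σ → ℝ) (π : σ → α → ℝ) (ρ : σ → ℝ)
    (hP : ∀ s a s', 0 ≤ P s a s') (hπ : ∀ s a, 0 ≤ π s a) (hρ : ∀ s, 0 ≤ ρ s) :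
    ∀ t s, 0 ≤ stateDist P π ρ t s := by
  intro t
  induction t with
  | zero => exact hρ
  | succ t ih =>
    intro s'
    exact Finset.sum_nonneg fun s _ => Finset.sum_nonneg fun a _ =>
      mul_nonneg (mul_nonneg (ih s) (hπ s a)) (hP s a s')

lemma stateDist_sum_one (P : σ → α → σ → ℝ) (π : σ → α → ℝ) (ρ : σ → ℝ)
    (hP : ∀ s a, ∑ s', P s a s' = 1) (hπ : ∀ s, ∑ a, π s a = 1) (hρ : ∑ s, ρ s = 1) :
    ∀ t, ∑ s, stateDist P π ρ t s = 1 := by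
  intro t
  induction t with
  | zero => exact hρ
  | succ t ih =>
    show ∑ s', ∑ s, ∑ a, stateDist P π ρ t s * π s a * P s a s' = 1
    rw [Finset.sum_comm]
    have h1 : ∀ s, ∑ s', ∑ a, stateDist P π ρ t s * π s a * P s a s'
        = stateDist P π ρ t s := by
      intro s
      rw [Finset.sum_comm]
      have : ∀ a, ∑ s', stateDist P π ρ t s * π s a * P s a s'
          = stateDist P π ρ t s * π s a := by
        intro a; rw [← Finset.mul_sum, hP, mul_one]
      simp_rw [this, ← Finset.mul_sum, hπ, mul_one]
    simp_rw [h1, ih]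

omit [Fintype σ] [Fintype α] in
lemma dirac_nonneg {s s' : σ} [DecidableEq σ] : 0 ≤ dirac s s' := by
  unfold dirac; positivity

lemma dirac_sum_one (s : σ) [DecidableEq σ] : ∑ s', dirac s s' = 1 := by
  simp [dirac]

end Generic

section Prod
variable {N : ℕ} {S A : Fin N → Type}
variable [∀ i, Fintype (S i)] [∀ i, DecidableEq (S i)] [∀ i, Fintype (A i)]

lemma dirac_pi (s0 s : ∀ i, S i) : dirac s0 s = ∏ i, dirac (s0 i) (s i) := by
  classical
  by_cases h : s = s0
  · subst h; simp [dirac]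
  · obtain ⟨i, hi⟩ : ∃ i, s i ≠ s0 i := by
      by_contra hc
      push_neg at hc
      exact h (funext hc)
    rw [show dirac s0 s = 0 from if_neg h]
    exact (Finset.prod_eq_zero (f := fun i => dirac (s0 i) (s i)) (Finset.mem_univ i)
      (if_neg hi)).symm

lemma stateDist_prod (P : ∀ i, S i → A i → S i → ℝ) (θ : ∀ i, S i → A i → ℝ)
    (s0 : ∀ i, S i) :
    ∀ t s, stateDist (jointP P) (jointPiL θ) (dirac s0) t s
      = ∏ i, stateDist (P i) (θ i) (dirac (s0 i)) t (s i) := by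
  intro t
  induction t with
  | zero => exact dirac_pi s0
  | succ t ih =>
    intro s
    show ∑ sp, ∑ a, stateDist (jointP P) (jointPiL θ) (dirac s0) t sp
        * jointPiL θ sp a * jointP P sp a s = _
    have step1 : ∀ (sp : ∀ i, S i) (a : ∀ i, A i),
        stateDist (jointP P) (jointPiL θ) (dirac s0) t sp * jointPiL θ sp a * jointP P sp a s
        = ∏ j, (stateDist (P j) (θ j) (dirac (s0 j)) t (sp j) * θ j (sp j) (a j)
            * P j (sp j) (a j) (s j)) := by
      intro sp a
      rw [ih, jointPiL, jointP, ← Finset.prod_mul_distrib, ← Finset.prod_mul_distrib]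
    simp_rw [step1]
    rw [show (∑ sp : ∀ i, S i, ∑ a : ∀ i, A i, ∏ j,
        (stateDist (P j) (θ j) (dirac (s0 j)) t (sp j) * θ j (sp j) (a j)
          * P j (sp j) (a j) (s j)))
      = ∑ sp : ∀ i, S i, ∏ j, ∑ x, (stateDist (P j) (θ j) (dirac (s0 j)) t (sp j)
          * θ j (sp j) x * P j (sp j) x (s j)) from
      Finset.sum_congr rfl fun sp _ =>
        (Fintype.prod_sum (fun j (x : A j) => stateDist (P j) (θ j) (dirac (s0 j)) t (sp j)
          * θ j (sp j) x * P j (sp j) x (s j))).symm]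
    rw [← Fintype.prod_sum (fun j (y : S j) => ∑ x, stateDist (P j) (θ j) (dirac (s0 j)) t y
      * θ j y x * P j y x (s j))]
    rfl
end Prod

section Key
variable {N : ℕ} {S A : Fin N → Type}
variable [∀ i, Fintype (S i)] [∀ i, DecidableEq (S i)] [∀ i, Fintype (A i)]
variable [∀ i, Nonempty (S i)] [∀ i, Nonempty (A i)]

/-- Reindex a double sum over state/action profiles as a single sum over
profiles of state-action pairs. -/
lemma sum_pair (F : (∀ j, S j × A j) → ℝ) :
    ∑ s : ∀ j, S j, ∑ a : ∀ j, A j, F (fun j => (s j, a j)) = ∑ w : ∀ j, S j × A j, F w := by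
  classical
  let e : ((∀ j, S j) × (∀ j, A j)) ≃ (∀ j, S j × A j) :=
    { toFun := fun p j => (p.1 j, p.2 j)
      invFun := fun w => (fun j => (w j).1, fun j => (w j).2)
      left_inv := fun p => rfl
      right_inv := fun w => rfl }
  rw [← Equiv.sum_comp e F, Fintype.sum_prod_type]
  rfl

/-- Key step: the per-timestep expectation of a function that does not depend
on agent `i`'s state or action is unchanged when agent `i`'s policy changes. -/
lemma key_term (P : ∀ i, S i → A i → S i → ℝ)
    (hP : ∀ i si ai, P i si ai ∈ stdSimplex ℝ (S i))
    (i : Fin N) (θ : ∀ j, S j → A j → ℝ) (hθ : feasibleL θ)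
    (θi' : S i → A i → ℝ) (hθi' : ∀ si, θi' si ∈ stdSimplex ℝ (A i))
    (g : (∀ j, S j) → (∀ j, A j) → ℝ)
    (hg : ∀ s a (x : S i) (y : A i),
      g (Function.update s i x) (Function.update a i y) = g s a)
    (s0 : ∀ j, S j) (t : ℕ) :
    ∑ s, ∑ a, stateDist (jointP P) (jointPiL (Function.update θ i θi')) (dirac s0) t s
        * jointPiL (Function.update θ i θi') s a * g s a
    = ∑ s, ∑ a, stateDist (jointP P) (jointPiL θ) (dirac s0) t s
        * jointPiL θ s a * g s a := by
  classical
  set θ' := Function.update θ i θi' with hθ'def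
  -- rewrite each side as a single sum over pair-profiles
  have rewr : ∀ η : ∀ j, S j → A j → ℝ,
      ∑ s, ∑ a, stateDist (jointP P) (jointPiL η) (dirac s0) t s * jointPiL η s a * g s a
      = ∑ w : ∀ j, S j × A j,
          (∏ j, (stateDist (P j) (η j) (dirac (s0 j)) t (w j).1 * η j (w j).1 (w j).2))
            * g (fun j => (w j).1) (fun j => (w j).2) := by
    intro η
    rw [← sum_pair (fun w => (∏ j, (stateDist (P j) (η j) (dirac (s0 j)) t (w j).1
      * η j (w j).1 (w j).2)) * g (fun j => (w j).1) (fun j => (w j).2))]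
    refine Finset.sum_congr rfl fun s _ => Finset.sum_congr rfl fun a _ => ?_
    rw [stateDist_prod, jointPiL, ← Finset.prod_mul_distrib]
  rw [rewr θ', rewr θ]
  -- apply the splitting lemma at coordinate i
  refine sum_split (B := fun j => S j × A j) i
    (fun j p => stateDist (P j) (θ' j) (dirac (s0 j)) t p.1 * θ' j p.1 p.2)
    (fun j p => stateDist (P j) (θ j) (dirac (s0 j)) t p.1 * θ j p.1 p.2)
    (fun j hj => by simp only [hθ'def, Function.update_of_ne hj]) ?_ _ ?_
  · -- equal sums at coordinate i: both are probability distributions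
    have sum1 : ∀ (η : S i → A i → ℝ), (∀ si, η si ∈ stdSimplex ℝ (A i)) →
        ∑ p : S i × A i, stateDist (P i) η (dirac (s0 i)) t p.1 * η p.1 p.2 = 1 := by
      intro η hη
      rw [Fintype.sum_prod_type]
      have : ∀ x : S i, ∑ y : A i, stateDist (P i) η (dirac (s0 i)) t x * η x y
          = stateDist (P i) η (dirac (s0 i)) t x := by
        intro x; rw [← Finset.mul_sum, (hη x).2, mul_one]
      simp_rw [this]
      exact stateDist_sum_one _ _ _ (fun s a => (hP i s a).2) (fun s => (hη s).2)
        (dirac_sum_one _) t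
    rw [sum1 (θ' i) (by rw [hθ'def]; simp [hθi']), sum1 (θ i) (hθ i)]
  · -- g-part invariant at coordinate i
    intro w p
    have h1 : (fun j => ((Function.update w i p) j).1)
        = Function.update (fun j => (w j).1) i p.1 := by
      funext j
      by_cases hj : j = i
      · subst hj; simp
      · simp [Function.update_of_ne hj]
    have h2 : (fun j => ((Function.update w i p) j).2)
        = Function.update (fun j => (w j).2) i p.2 := by
      funext j
      by_cases hj : j = i
      · subst hj; simp
      · simp [Function.update_of_ne hj]
    rw [h1, h2, hg]
end Key

section Decomp
variable {N : ℕ}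

lemma sum_eq_ite_add_erase (t : Finset (Fin N)) (i : Fin N) (f : Fin N → ℝ) :
    ∑ j ∈ t, f j = (if i ∈ t then f i else 0) + ∑ j ∈ t.erase i, f j := by
  by_cases h : i ∈ t
  · rw [if_pos h, Finset.add_sum_erase _ _ h]
  · rw [if_neg h, Finset.erase_eq_of_notMem h, zero_add]

lemma pair_decomp (i : Fin N) (h : Fin N → Fin N → ℝ)
    (hs : ∀ k j, k ≠ j → h k j = h j k) :
    ∑ k, ∑ j ∈ Finset.univ.filter (fun j => j < k), h k j
    = (∑ j ∈ Finset.univ.erase i, h i j)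
      + ∑ k ∈ Finset.univ.erase i,
          ∑ j ∈ (Finset.univ.filter (fun j => j < k)).erase i, h k j := by
  classical
  have step1 : ∀ k, ∑ j ∈ Finset.univ.filter (fun j => j < k), h k j
      = (if i < k then h k i else 0)
        + ∑ j ∈ (Finset.univ.filter (fun j => j < k)).erase i, h k j := by
    intro k
    rw [sum_eq_ite_add_erase (Finset.univ.filter (fun j => j < k)) i (h k)]
    congr 2
    simp
  simp_rw [step1]
  rw [Finset.sum_add_distrib]
  -- second summand: split off k = i
  rw [sum_eq_ite_add_erase Finset.univ i
    (fun k => ∑ j ∈ (Finset.univ.filter (fun j => j < k)).erase i, h k j), if_pos (Finset.mem_univ i)]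
  have e0 : (Finset.univ.filter (fun j => j < i)).erase i = Finset.univ.filter (fun j => j < i) :=
    Finset.erase_eq_of_notMem (by simp)
  -- first summand
  have e1 : ∑ k, (if i < k then h k i else 0) = ∑ k ∈ Finset.univ.filter (fun k => i < k), h i k := by
    rw [Finset.sum_filter]
    refine Finset.sum_congr rfl fun k _ => ?_
    by_cases hk : i < k
    · rw [if_pos hk, if_pos hk, hs k i (ne_of_gt hk)]
    · rw [if_neg hk, if_neg hk]
  rw [e1, e0]
  have e2 : ∑ j ∈ Finset.univ.erase i, h i j
      = ∑ k ∈ Finset.univ.filter (fun k => i < k), h i k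
        + ∑ j ∈ Finset.univ.filter (fun j => j < i), h i j := by
    rw [← Finset.sum_filter_add_sum_filter_not (Finset.univ.erase i) (fun j => i < j) (h i)]
    congr 1
    · congr 1
      ext j
      simp only [Finset.mem_filter, Finset.mem_erase, Finset.mem_univ, true_and, and_true]
      exact ⟨fun ⟨_, h2⟩ => h2, fun h2 => ⟨(ne_of_gt h2), h2⟩⟩
    · congr 1
      ext j
      simp only [Finset.mem_filter, Finset.mem_erase, Finset.mem_univ, true_and, and_true]
      constructor
      · rintro ⟨hne, hnlt⟩
        exact lt_of_le_of_ne (not_lt.1 hnlt) hne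
      · intro hlt
        exact ⟨ne_of_lt hlt, not_lt.2 (le_of_lt hlt)⟩
  rw [e2]
  ring
end Decomp

section Summ
variable {σ α : Type} [Fintype σ] [Fintype α]

lemma term_abs_le (P : σ → α → σ → ℝ) (π : σ → α → ℝ) (ρ : σ → ℝ) (f : σ → α → ℝ)
    (hPnn : ∀ s a s', 0 ≤ P s a s') (hPsum : ∀ s a, ∑ s', P s a s' = 1)
    (hπnn : ∀ s a, 0 ≤ π s a) (hπsum : ∀ s, ∑ a, π s a = 1)
    (hρnn : ∀ s, 0 ≤ ρ s) (hρsum : ∑ s, ρ s = 1) (t : ℕ) :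
    |∑ s, ∑ a, stateDist P π ρ t s * π s a * f s a| ≤ ∑ s, ∑ a, |f s a| := by
  classical
  set C : ℝ := ∑ s, ∑ a, |f s a| with hC
  have hd := stateDist_nonneg P π ρ hPnn hπnn hρnn
  have hfC : ∀ s a, |f s a| ≤ C := by
    intro s a
    calc |f s a| ≤ ∑ a', |f s a'| :=
          Finset.single_le_sum (f := fun a' => |f s a'|)
            (fun a' _ => abs_nonneg _) (Finset.mem_univ a)
      _ ≤ C := Finset.single_le_sum
          (f := fun s => ∑ a', |f s a'|)
          (fun s' _ => Finset.sum_nonneg fun a' _ => abs_nonneg _) (Finset.mem_univ s)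
  calc |∑ s, ∑ a, stateDist P π ρ t s * π s a * f s a|
      ≤ ∑ s, ∑ a, stateDist P π ρ t s * π s a * |f s a| := by
        refine (Finset.abs_sum_le_sum_abs _ _).trans (Finset.sum_le_sum fun s _ =>
          (Finset.abs_sum_le_sum_abs _ _).trans (Finset.sum_le_sum fun a _ => ?_))
        rw [abs_mul, abs_mul, abs_of_nonneg (hd t s), abs_of_nonneg (hπnn s a)]
    _ ≤ ∑ s, ∑ a, stateDist P π ρ t s * π s a * C :=
        Finset.sum_le_sum fun s _ => Finset.sum_le_sum fun a _ =>
          mul_le_mul_of_nonneg_left (hfC s a) (mul_nonneg (hd t s) (hπnn s a))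
    _ = C := by
        have h1 : ∀ s, ∑ a, stateDist P π ρ t s * π s a * C
            = stateDist P π ρ t s * C := by
          intro s
          have he : ∀ a, stateDist P π ρ t s * π s a * C
              = stateDist P π ρ t s * C * π s a := fun a => by ring
          simp_rw [he, ← Finset.mul_sum, hπsum s, mul_one]
        simp_rw [h1, ← Finset.sum_mul, stateDist_sum_one P π ρ hPsum hπsum hρsum t, one_mul]

lemma summable_term (γ : ℝ) (hγ0 : 0 ≤ γ) (hγ1 : γ < 1)
    (P : σ → α → σ → ℝ) (π : σ → α → ℝ) (ρ : σ → ℝ) (f : σ → α → ℝ)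
    (hPnn : ∀ s a s', 0 ≤ P s a s') (hPsum : ∀ s a, ∑ s', P s a s' = 1)
    (hπnn : ∀ s a, 0 ≤ π s a) (hπsum : ∀ s, ∑ a, π s a = 1)
    (hρnn : ∀ s, 0 ≤ ρ s) (hρsum : ∑ s, ρ s = 1) :
    Summable (fun t => γ ^ t * ∑ s, ∑ a, stateDist P π ρ t s * π s a * f s a) := by
  refine Summable.of_norm_bounded (g := fun t => (∑ s, ∑ a, |f s a|) * γ ^ t)
    ((summable_geometric_of_lt_one hγ0 hγ1).mul_left _) fun t => ?_
  rw [Real.norm_eq_abs, abs_mul, abs_pow, abs_of_nonneg hγ0, mul_comm]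
  exact mul_le_mul_of_nonneg_right
    (term_abs_le P π ρ f hPnn hPsum hπnn hπsum hρnn hρsum t) (pow_nonneg hγ0 t)

end Summ

end AuxLemmas

/-- **MPG construction from symmetric pairwise rewards.** In a
finite product-structured Markov game where each agent's reward is a sum of
symmetric pairwise terms `r_i = ∑_{j ≠ i} r_ij(s_i, s_j, a_i, a_j)` with
`r_ij(s_i,s_j,a_i,a_j) = r_ji(s_j,s_i,a_j,a_i)`, the game is a Markov
potential game with potential `φ^joint(s,a) = ∑ i, ∑_{j < i} r_ij`. -/
theorem mpg_construction_from_pairwise_rewards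
    {N : ℕ} {S A : Fin N → Type}
    [∀ i, Fintype (S i)] [∀ i, DecidableEq (S i)] [∀ i, Fintype (A i)]
    [∀ i, Nonempty (S i)] [∀ i, Nonempty (A i)]
    (γ : ℝ) (hγ0 : 0 ≤ γ) (hγ1 : γ < 1)
    (P : ∀ i, S i → A i → S i → ℝ)
    (hP : ∀ i si ai, P i si ai ∈ stdSimplex ℝ (S i))
    (ρ : ∀ i, S i → ℝ) (hρ : ∀ i, ρ i ∈ stdSimplex ℝ (S i))
    (rpair : ∀ i j : Fin N, S i → S j → A i → A j → ℝ)
    -- symmetry of the pairwise rewards: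
    (hsym : ∀ i j : Fin N, i ≠ j → ∀ si sj ai aj,
      rpair i j si sj ai aj = rpair j i sj si aj ai) :
    ∀ i : Fin N, ∀ θ : ∀ j, S j → A j → ℝ, feasibleL θ →
      ∀ θi' : S i → A i → ℝ, (∀ si, θi' si ∈ stdSimplex ℝ (A i)) →
        ∀ s : ∀ j, S j,
          expDisc γ (jointP P) (jointPiL (Function.update θ i θi')) (dirac s)
              (fun st b => ∑ j ∈ Finset.univ.erase i,
                rpair i j (st i) (st j) (b i) (b j))
            - expDisc γ (jointP P) (jointPiL θ) (dirac s)
              (fun st b => ∑ j ∈ Finset.univ.erase i,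
                rpair i j (st i) (st j) (b i) (b j))
          = expDisc γ (jointP P) (jointPiL (Function.update θ i θi')) (dirac s)
              (fun st b => ∑ k, ∑ j ∈ Finset.univ.filter (fun j => j < k),
                rpair k j (st k) (st j) (b k) (b j))
            - expDisc γ (jointP P) (jointPiL θ) (dirac s)
              (fun st b => ∑ k, ∑ j ∈ Finset.univ.filter (fun j => j < k),
                rpair k j (st k) (st j) (b k) (b j)) := by
  classical
  intro i θ hθ θi' hθi' s
  set θ' : ∀ j, S j → A j → ℝ := Function.update θ i θi' with hθ'def
  set rf : (∀ j, S j) → (∀ j, A j) → ℝ := fun st b => ∑ j ∈ Finset.univ.erase i,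
    rpair i j (st i) (st j) (b i) (b j) with hrf
  set φf : (∀ j, S j) → (∀ j, A j) → ℝ := fun st b => ∑ k,
    ∑ j ∈ Finset.univ.filter (fun j => j < k),
      rpair k j (st k) (st j) (b k) (b j) with hφf
  set gf : (∀ j, S j) → (∀ j, A j) → ℝ := fun st b => ∑ k ∈ Finset.univ.erase i,
    ∑ j ∈ (Finset.univ.filter (fun j => j < k)).erase i,
      rpair k j (st k) (st j) (b k) (b j) with hgf
  -- pointwise decomposition of the potential
  have hpt : ∀ st b, φf st b = rf st b + gf st b := by
    intro st b
    exact pair_decomp i (fun k j => rpair k j (st k) (st j) (b k) (b j))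
      (fun k j hkj => hsym k j hkj (st k) (st j) (b k) (b j))
  -- gf does not depend on coordinate i
  have hginv : ∀ (st : ∀ j, S j) (b : ∀ j, A j) (x : S i) (y : A i),
      gf (Function.update st i x) (Function.update b i y) = gf st b := by
    intro st b x y
    refine Finset.sum_congr rfl fun k hk => Finset.sum_congr rfl fun j hj => ?_
    have hk' : k ≠ i := (Finset.mem_erase.1 hk).1
    have hj' : j ≠ i := (Finset.mem_erase.1 hj).1
    rw [Function.update_of_ne hk', Function.update_of_ne hj',
      Function.update_of_ne hk', Function.update_of_ne hj']
  -- feasibility of the deviated profile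
  have hθ'feas : feasibleL θ' := by
    intro j sj
    by_cases hj : j = i
    · subst hj; rw [hθ'def, Function.update_self]; exact hθi' sj
    · rw [hθ'def, Function.update_of_ne hj]; exact hθ j sj
  -- joint chain facts
  have hjPnn : ∀ (st : ∀ j, S j) (b : ∀ j, A j) (st' : ∀ j, S j), 0 ≤ jointP P st b st' :=
    fun st b st' => Finset.prod_nonneg fun j _ => (hP j (st j) (b j)).1 (st' j)
  have hjPsum : ∀ (st : ∀ j, S j) (b : ∀ j, A j), ∑ st', jointP P st b st' = 1 := by
    intro st b
    rw [show (∑ st' : ∀ j, S j, jointP P st b st')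
        = ∑ st' : ∀ j, S j, ∏ j, P j (st j) (b j) (st' j) from rfl,
      ← Fintype.prod_sum (fun j (y : S j) => P j (st j) (b j) y)]
    exact Finset.prod_eq_one fun j _ => (hP j (st j) (b j)).2
  have hjπnn : ∀ (η : ∀ j, S j → A j → ℝ), feasibleL η →
      ∀ (st : ∀ j, S j) (b : ∀ j, A j), 0 ≤ jointPiL η st b :=
    fun η hη st b => Finset.prod_nonneg fun j _ => (hη j (st j)).1 (b j)
  have hjπsum : ∀ (η : ∀ j, S j → A j → ℝ), feasibleL η →
      ∀ (st : ∀ j, S j), ∑ b, jointPiL η st b = 1 := by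
    intro η hη st
    rw [show (∑ b : ∀ j, A j, jointPiL η st b)
        = ∑ b : ∀ j, A j, ∏ j, η j (st j) (b j) from rfl,
      ← Fintype.prod_sum (fun j (y : A j) => η j (st j) y)]
    exact Finset.prod_eq_one fun j _ => (hη j (st j)).2
  -- summability
  have hsumm : ∀ (η : ∀ j, S j → A j → ℝ), feasibleL η →
      ∀ f : (∀ j, S j) → (∀ j, A j) → ℝ,
      Summable (fun t => γ ^ t * ∑ st, ∑ b,
        stateDist (jointP P) (jointPiL η) (dirac s) t st * jointPiL η st b * f st b) :=
    fun η hη f => summable_term γ hγ0 hγ1 _ _ _ f hjPnn hjPsum (hjπnn η hη)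
      (hjπsum η hη) (fun _ => dirac_nonneg) (dirac_sum_one s)
  -- linearity of expDisc over the pointwise decomposition
  have hlin : ∀ (η : ∀ j, S j → A j → ℝ), feasibleL η →
      expDisc γ (jointP P) (jointPiL η) (dirac s) φf
      = expDisc γ (jointP P) (jointPiL η) (dirac s) rf
        + expDisc γ (jointP P) (jointPiL η) (dirac s) gf := by
    intro η hη
    rw [expDisc, expDisc, expDisc, ← Summable.tsum_add (hsumm η hη rf) (hsumm η hη gf)]
    refine tsum_congr fun t => ?_
    rw [← mul_add, ← Finset.sum_add_distrib]
    congr 1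
    refine Finset.sum_congr rfl fun st _ => ?_
    rw [← Finset.sum_add_distrib]
    refine Finset.sum_congr rfl fun b _ => ?_
    rw [hpt st b, mul_add]
  -- key invariance
  have hkey : expDisc γ (jointP P) (jointPiL θ') (dirac s) gf
      = expDisc γ (jointP P) (jointPiL θ) (dirac s) gf := by
    refine tsum_congr fun t => ?_
    rw [hθ'def, key_term P hP i θ hθ θi' hθi' gf hginv s t]
  have h1 := hlin θ' hθ'feas
  have h2 := hlin θ hθ
  linarith
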